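/- Let H = (V,E) be a 3-hypergraph with a linear order ≺ on E, let E₃ be its set of cardinality-3 hyperedges, and let S ⊆ E₃. Call a pair (e,e') relevant if e ∈ S, e' ∈ E₃, e ∩ e' ≠ ∅ and e' ≺ e. Let D := {v ∈ V : e'∖e = {v} for some relevant pair (e,e')}, R := {e' ∈ E₃ : (e,e') is relevant for some e ∈ S}, and N := {e'∖e : (e,e') relevant and |e'∖e| = 2}. Define H' to be the hypergraph with vertex set V∖D and hyperedge set {e'' ∈ (E∖R) ∪ N : e'' ⊆ V∖D}. Then for every k ∈ ℕ, I'_S(H,k) = I_S(H',k). -/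
import Mathlib


attribute [local instance] Classical.propDecidable

/-- `I_S(H',k)` relative to a vertex set `Vset`: subsets `X ⊆ Vset` of cardinality `k` that are
independent in the underlying graph (no hyperedge of cardinality exactly 2 is contained in `X`)
and contain all hyperedges of `S`. -/
noncomputable def ISv {V : Type} [Fintype V] (Vset : Finset V) (E S : Finset (Finset V))
    (k : ℕ) : Finset (Finset V) :=
  Finset.univ.filter fun X => X ⊆ Vset ∧ X.card = k ∧
    (∀ e ∈ E, e.card = 2 → ¬ e ⊆ X) ∧ ∀ e ∈ S, e ⊆ X

/-- `I'_S(H,k)`: members of `I_S(H,k)` such that for every `e ∈ S` and every hyperedge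
`e' ∈ E₃` with `e ∩ e' ≠ ∅` and `e' ≺ e`, `e'` is not contained in `X`. -/
noncomputable def Iprime {V : Type} [Fintype V] [DecidableEq V] (E : Finset (Finset V))
    (r : Finset V → Finset V → Prop) (S : Finset (Finset V)) (k : ℕ) : Finset (Finset V) :=
  (ISv Finset.univ E S k).filter fun X =>
    ∀ e ∈ S, ∀ e' ∈ E, e'.card = 3 → (e ∩ e').Nonempty → r e' e → ¬ e' ⊆ X

/-- `D`: vertices `v` such that `e' \ e = {v}` for some relevant pair `(e,e')`. -/
noncomputable def Dset {V : Type} [Fintype V] [DecidableEq V] (E S : Finset (Finset V))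
    (r : Finset V → Finset V → Prop) : Finset V :=
  Finset.univ.filter fun v =>
    ∃ e ∈ S, ∃ e' ∈ E, e'.card = 3 ∧ (e ∩ e').Nonempty ∧ r e' e ∧ e' \ e = {v}

/-- `R`: hyperedges `e' ∈ E₃` appearing in some relevant pair `(e,e')` with `e ∈ S`. -/
noncomputable def Rset {V : Type} [Fintype V] [DecidableEq V] (E S : Finset (Finset V))
    (r : Finset V → Finset V → Prop) : Finset (Finset V) :=
  E.filter fun e' => e'.card = 3 ∧ ∃ e ∈ S, (e ∩ e').Nonempty ∧ r e' e

/-- `N`: the sets `e' \ e` of cardinality 2 for relevant pairs `(e,e')`. -/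
noncomputable def Nset {V : Type} [Fintype V] [DecidableEq V] (E S : Finset (Finset V))
    (r : Finset V → Finset V → Prop) : Finset (Finset V) :=
  ((S ×ˢ E).filter fun p =>
      p.2.card = 3 ∧ (p.1 ∩ p.2).Nonempty ∧ r p.2 p.1 ∧ (p.2 \ p.1).card = 2).image
    fun p => p.2 \ p.1

/-- The hyperedge set of `H'`: hyperedges of `(E ∖ R) ∪ N` contained in `V ∖ D`. -/
noncomputable def Eprime {V : Type} [Fintype V] [DecidableEq V] (E S : Finset (Finset V))
    (r : Finset V → Finset V → Prop) : Finset (Finset V) :=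
  ((E \ Rset E S r) ∪ Nset E S r).filter fun e'' => e'' ⊆ Finset.univ \ Dset E S r

/-- **Resolving intersections in a 3-hypergraph.** With `H'` as constructed (vertex set
`V ∖ D`, hyperedge set `{e'' ∈ (E∖R) ∪ N : e'' ⊆ V∖D}`), we have `I'_S(H,k) = I_S(H',k)`. -/
theorem Iprime_eq_ISets_resolved {V : Type} [Fintype V] [DecidableEq V]
    (E : Finset (Finset V)) (hE : ∀ e ∈ E, e.card = 2 ∨ e.card = 3)
    (r : Finset V → Finset V → Prop)
    (hirrefl : ∀ e ∈ E, ¬ r e e)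
    (htrans : ∀ e ∈ E, ∀ e' ∈ E, ∀ e'' ∈ E, r e e' → r e' e'' → r e e'')
    (htotal : ∀ e ∈ E, ∀ e' ∈ E, e ≠ e' → r e e' ∨ r e' e)
    (S : Finset (Finset V)) (hS : S ⊆ E.filter fun e => e.card = 3) (k : ℕ) :
    Iprime E r S k = ISv (Finset.univ \ Dset E S r) (Eprime E S r) S k := by
  ext X
  simp only [Iprime, ISv, Finset.mem_filter, Finset.mem_univ, true_and]
  constructor
  · rintro ⟨⟨-, hk, hind, hS'⟩, hnr⟩
    have hXD : X ⊆ Finset.univ \ Dset E S r := by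
      intro v hv
      simp only [Finset.mem_sdiff, Finset.mem_univ, true_and, Dset, Finset.mem_filter]
      rintro ⟨e, he, e', he', hc3, hne, hre, hsd⟩
      refine hnr e he e' he' hc3 hne hre (fun w hw => ?_)
      by_cases hwe : w ∈ e
      · exact hS' e he hwe
      · have hws : w ∈ e' \ e := Finset.mem_sdiff.2 ⟨hw, hwe⟩
        rw [hsd, Finset.mem_singleton] at hws
        rwa [hws]
    refine ⟨hXD, hk, ?_, hS'⟩
    intro f hf hf2 hfX
    simp only [Eprime, Finset.mem_filter, Finset.mem_union, Finset.mem_sdiff] at hf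
    rcases hf.1 with ⟨hfE, -⟩ | hfN
    · exact hind f hfE hf2 hfX
    · simp only [Nset, Finset.mem_image, Finset.mem_filter, Finset.mem_product] at hfN
      obtain ⟨⟨e, e'⟩, ⟨⟨heS, he'E⟩, hc3, hne, hre, hcd⟩, rfl⟩ := hfN
      refine hnr e heS e' he'E hc3 hne hre (fun w hw => ?_)
      by_cases hwe : w ∈ e
      · exact hS' e heS hwe
      · exact hfX (Finset.mem_sdiff.2 ⟨hw, hwe⟩)
  · rintro ⟨hXD, hk, hind, hS'⟩
    refine ⟨⟨Finset.subset_univ X, hk, ?_, hS'⟩, ?_⟩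
    · intro f hfE hf2 hfX
      refine hind f ?_ hf2 hfX
      simp only [Eprime, Finset.mem_filter, Finset.mem_union, Finset.mem_sdiff]
      refine ⟨Or.inl ⟨hfE, ?_⟩, hfX.trans hXD⟩
      simp only [Rset, Finset.mem_filter]
      rintro ⟨-, hc3, -⟩
      omega
    · intro e heS e' he'E hc3 hne hre he'X
      have heE : e ∈ E ∧ e.card = 3 := by
        have := hS heS; simpa [Finset.mem_filter] using this
      have hcard : (e' \ e).card + (e' ∩ e).card = 3 := by
        rw [Finset.card_sdiff_add_card_inter, hc3]
      have hpos : 0 < (e' ∩ e).card :=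
        Finset.card_pos.2 (by rwa [Finset.inter_comm] at hne)
      rcases Nat.lt_or_ge (e' \ e).card 1 with h0 | h1
      · have hsub : e' ⊆ e := by
          rw [← Finset.sdiff_eq_empty_iff_subset]
          exact Finset.card_eq_zero.1 (by omega)
        have heq : e' = e := Finset.eq_of_subset_of_card_le hsub (by omega)
        rw [heq] at hre
        exact hirrefl e heE.1 hre
      rcases Nat.lt_or_ge (e' \ e).card 2 with hc1 | hc2
      · obtain ⟨v, hv⟩ := Finset.card_eq_one.1 (by omega : (e' \ e).card = 1)
        have hvD : v ∈ Dset E S r := by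
          simp only [Dset, Finset.mem_filter, Finset.mem_univ, true_and]
          exact ⟨e, heS, e', he'E, hc3, hne, hre, hv⟩
        have hvX : v ∈ X := he'X (by
          have hm : v ∈ e' \ e := hv ▸ Finset.mem_singleton_self v
          exact (Finset.mem_sdiff.1 hm).1)
        have := Finset.mem_sdiff.1 (hXD hvX)
        exact this.2 hvD
      · have h2 : (e' \ e).card = 2 := by omega
        have hfN : e' \ e ∈ Nset E S r := by
          simp only [Nset, Finset.mem_image, Finset.mem_filter, Finset.mem_product]
          exact ⟨(e, e'), ⟨⟨heS, he'E⟩, hc3, hne, hre, h2⟩, rfl⟩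
        have hsubX : e' \ e ⊆ X := fun w hw => he'X (Finset.mem_sdiff.1 hw).1
        have hfE' : e' \ e ∈ Eprime E S r := by
          simp only [Eprime, Finset.mem_filter, Finset.mem_union]
          exact ⟨Or.inr hfN, hsubX.trans hXD⟩
        exact hind _ hfE' (by omega) hsubX
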